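/- Suppose C is Hom-finite. Let U →u V →v W →h U[1] be a distinguished triangle in C that is right almost split, with W indecomposable having local endomorphism ring. Let M be an indecomposable object of C such that M is not isomorphic to W and M[1] is not isomorphic to W. Then dim_k Hom(M,U) + dim_k Hom(M,W) = dim_k Hom(M,V). -/

import Mathlib

open CategoryTheory Category Limits Pretriangulated

universe v u

section Aux

variable {C : Type u} [Category.{v} C] [Preadditive C]
    [HasZeroObject C] [HasShift C ℤ] [∀ n : ℤ, (shiftFunctor C n).Additive]
    [Pretriangulated C] [HasBinaryBiproducts C]

/-- A split epimorphism from an indecomposable object onto a nonzero object is an iso. -/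
lemma aux_iso_of_splitEpi {X W : C} (f : X ⟶ W) (hf : IsSplitEpi f)
    (hX : Indecomposable X) (hW : ¬ IsZero W) : Nonempty (X ≅ W) := by
  obtain ⟨sp⟩ := hf.exists_splitEpi
  set s : W ⟶ X := sp.section_ with hs
  have hsf : s ≫ f = 𝟙 W := sp.id
  obtain ⟨N, p, δ, mem⟩ := distinguished_cocone_triangle s
  have hδ : δ = 0 := by
    have h1 : δ ≫ s⟦(1 : ℤ)⟧' = 0 := comp_distTriang_mor_zero₃₁ _ mem
    have : δ ≫ (s ≫ f)⟦(1 : ℤ)⟧' = 0 := by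
      rw [Functor.map_comp, ← assoc, h1, zero_comp]
    simpa [hsf] using this
  have hsp : s ≫ p = 0 := comp_distTriang_mor_zero₁₂ _ mem
  -- morphism of triangles to the biproduct triangle
  let φ : Triangle.mk s p δ ⟶ binaryBiproductTriangle W N :=
    { hom₁ := 𝟙 W
      hom₂ := biprod.lift f p
      hom₃ := 𝟙 N
      comm₁ := by
        change s ≫ biprod.lift f p = 𝟙 W ≫ biprod.inl
        apply biprod.hom_ext <;> simp [hsf, hsp]
      comm₂ := by
        change p ≫ 𝟙 N = biprod.lift f p ≫ biprod.snd
        simp [binaryBiproductTriangle]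
      comm₃ := by
        change δ ≫ (𝟙 W)⟦(1 : ℤ)⟧' = 𝟙 N ≫ 0
        simp [hδ, binaryBiproductTriangle] }
  have : IsIso φ.hom₂ :=
    isIso₂_of_isIso₁₃ φ mem (binaryBiproductTriangle_distinguished W N)
      (by change IsIso (𝟙 W); infer_instance) (by change IsIso (𝟙 N); infer_instance)
  have e : X ≅ W ⊞ N := @asIso _ _ _ _ φ.hom₂ this
  rcases hX.2 W N e with hzW | hzN
  · exact absurd hzW hW
  · have : IsIso ((Triangle.mk s p δ).mor₁) :=
      (Triangle.isZero₃_iff_isIso₁ _ mem).1 hzN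
    exact ⟨(asIso ((Triangle.mk s p δ).mor₁)).symm⟩

/-- The shift of an indecomposable object is indecomposable. -/
lemma aux_indecomposable_shift {M : C} (hM : Indecomposable M) :
    Indecomposable (M⟦(1 : ℤ)⟧) := by
  have eM : M⟦(1 : ℤ)⟧⟦(-1 : ℤ)⟧ ≅ M :=
    (shiftFunctorCompIsoId C (1 : ℤ) (-1 : ℤ) (by ring)).app M
  constructor
  · intro hz
    exact hM.1 (IsZero.of_iso ((shiftFunctor C (-1 : ℤ)).map_isZero hz) eM.symm)
  · intro Y Z e
    haveI : PreservesBiproductsOfShape WalkingPair (shiftFunctor C (-1 : ℤ)) :=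
      PreservesFiniteBiproducts.preserves
    haveI : PreservesBinaryBiproducts (shiftFunctor C (-1 : ℤ)) :=
      preservesBinaryBiproducts_of_preservesBiproducts _
    have e2 : M ≅ Y⟦(-1 : ℤ)⟧ ⊞ Z⟦(-1 : ℤ)⟧ :=
      eM.symm ≪≫ (shiftFunctor C (-1 : ℤ)).mapIso e ≪≫
        (shiftFunctor C (-1 : ℤ)).mapBiprod Y Z
    rcases hM.2 _ _ e2 with hz | hz
    · left
      have := (shiftFunctor C (1 : ℤ)).map_isZero hz
      exact IsZero.of_iso this
        (((shiftFunctorCompIsoId C (-1 : ℤ) (1 : ℤ) (by ring)).app Y).symm)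
    · right
      have := (shiftFunctor C (1 : ℤ)).map_isZero hz
      exact IsZero.of_iso this
        (((shiftFunctorCompIsoId C (-1 : ℤ) (1 : ℤ) (by ring)).app Z).symm)

end Aux

/-- Suppose the `k`-linear pretriangulated category `C` is Hom-finite.
Let `U ⟶ V ⟶ W ⟶ U⟦1⟧` be a distinguished triangle that is right almost split, with `W`
indecomposable having local endomorphism ring. If `M` is an indecomposable object with
`M ≇ W` and `M⟦1⟧ ≇ W`, then
`dim Hom(M,U) + dim Hom(M,W) = dim Hom(M,V)`. -/
theorem dim_hom_additive_on_right_almost_split_triangle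
    (k : Type*) [Field k] {C : Type u} [Category.{v} C] [Preadditive C] [Linear k C]
    [HasZeroObject C] [HasShift C ℤ] [∀ n : ℤ, (shiftFunctor C n).Additive]
    [Pretriangulated C] [HasBinaryBiproducts C]
    [∀ X Y : C, FiniteDimensional k (X ⟶ Y)]
    {U V W : C} (u : U ⟶ V) (v : V ⟶ W) (h : W ⟶ U⟦(1 : ℤ)⟧)
    (hdist : Triangle.mk u v h ∈ distTriang C)
    (hras : ∀ (X : C) (f : X ⟶ W), ¬ IsSplitEpi f → ∃ g : X ⟶ V, g ≫ v = f)
    (hW : Indecomposable W) (hWloc : IsLocalRing (End W))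
    (M : C) (hM : Indecomposable M)
    (hMW : ¬ Nonempty (M ≅ W)) (hMW1 : ¬ Nonempty (M⟦(1 : ℤ)⟧ ≅ W)) :
    Module.finrank k (M ⟶ U) + Module.finrank k (M ⟶ W) = Module.finrank k (M ⟶ V) := by
  -- the two composition linear maps
  set L1 : (M ⟶ U) →ₗ[k] (M ⟶ V) := Linear.rightComp k M u with hL1
  set L2 : (M ⟶ V) →ₗ[k] (M ⟶ W) := Linear.rightComp k M v with hL2
  -- L2 is surjective
  have hsurj : Function.Surjective L2 := by
    intro f
    have hnse : ¬ IsSplitEpi f := by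
      intro hse
      exact hMW (aux_iso_of_splitEpi f hse hM hW.1)
    obtain ⟨g, hg⟩ := hras M f hnse
    exact ⟨g, hg⟩
  -- exactness: ker L2 = range L1
  have hexact : LinearMap.ker L2 = LinearMap.range L1 := by
    ext f
    simp only [LinearMap.mem_ker, LinearMap.mem_range, hL1, hL2, Linear.rightComp_apply]
    constructor
    · intro hf
      obtain ⟨g, hg⟩ := Triangle.coyoneda_exact₂ _ hdist f hf
      exact ⟨g, hg.symm⟩
    · rintro ⟨g, rfl⟩
      have h0 : u ≫ v = 0 := comp_distTriang_mor_zero₁₂ _ hdist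
      rw [assoc, h0, comp_zero]
  -- L1 is injective
  have hinj : Function.Injective L1 := by
    rw [← LinearMap.ker_eq_bot]
    rw [LinearMap.ker_eq_bot']
    intro a ha
    have ha' : a ≫ u = 0 := ha
    have hT' := inv_rot_of_distTriang _ hdist
    obtain ⟨φ, hφ⟩ : ∃ φ : M ⟶ W⟦(-1 : ℤ)⟧, a = φ ≫ (Triangle.mk u v h).invRotate.mor₁ :=
      Triangle.coyoneda_exact₂ _ hT' a ha'
    -- φ : M ⟶ W⟦-1⟧, a = φ ≫ (invRotate).mor₁
    have key : φ ≫ h⟦(-1 : ℤ)⟧' = 0 := by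
      apply (shiftFunctor C (1 : ℤ)).map_injective
      rw [Functor.map_comp, Functor.map_zero]
      -- f : M⟦1⟧ ⟶ W
      set cε := (shiftEquiv C (1 : ℤ)).counitIso
      set f : M⟦(1 : ℤ)⟧ ⟶ W := φ⟦(1 : ℤ)⟧' ≫ cε.hom.app W with hf
      have hnat : h⟦(-1 : ℤ)⟧'⟦(1 : ℤ)⟧' ≫ cε.hom.app (U⟦(1 : ℤ)⟧)
          = cε.hom.app W ≫ h := cε.hom.naturality h
      have hnse : ¬ IsSplitEpi f := by
        intro hse
        exact hMW1 (aux_iso_of_splitEpi f hse (aux_indecomposable_shift hM) hW.1)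
      obtain ⟨g, hg⟩ := hras _ f hnse
      have hfh : f ≫ h = 0 := by
        have h0 : v ≫ h = 0 := comp_distTriang_mor_zero₂₃ _ hdist
        rw [← hg, assoc, h0, comp_zero]
      have : φ⟦(1 : ℤ)⟧' ≫ h⟦(-1 : ℤ)⟧'⟦(1 : ℤ)⟧' ≫ cε.hom.app (U⟦(1 : ℤ)⟧) = 0 := by
        erw [hnat, ← assoc, ← hf, hfh]
      have h2 : φ⟦(1 : ℤ)⟧' ≫ h⟦(-1 : ℤ)⟧'⟦(1 : ℤ)⟧' = 0 := by
        have := this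
        erw [← assoc] at this
        exact (cancel_mono (cε.hom.app (U⟦(1 : ℤ)⟧))).1 (by erw [zero_comp]; exact this)
      exact h2
    rw [hφ]
    have hm : (Triangle.mk u v h).invRotate.mor₁
        = -(h⟦(-1 : ℤ)⟧' ≫ (shiftEquiv C (1 : ℤ)).unitIso.inv.app U) := rfl
    erw [hm, Preadditive.comp_neg, ← assoc, key, zero_comp, neg_zero]
    rfl
  -- dimension count
  have e1 := LinearMap.finrank_range_add_finrank_ker L2
  have e2 : LinearMap.range L2 = ⊤ := LinearMap.range_eq_top.2 hsurj
  have e3 : Module.finrank k (LinearMap.range L1) = Module.finrank k (M ⟶ U) :=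
    LinearMap.finrank_range_of_inj hinj
  have eA : Module.finrank k (LinearMap.range L2) = Module.finrank k (M ⟶ W) := by
    rw [e2]; exact finrank_top k _
  have eB : Module.finrank k (LinearMap.ker L2) = Module.finrank k (M ⟶ U) := by
    rw [hexact]; exact e3
  rw [eA, eB] at e1
  omega
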